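/- Let q₀ > 0, α ∈ ℝ, and θ₊ ∈ (0, π) with θ₊ ≠ π/2. Define η(x,t) := q₀ x cos θ₊ - (α t / 2) cot θ₊, and define q(x,t) := (1/2) q₀ e^{i(α t - θ₊)} [ -1 + e^{2 i θ₊} + (1 + e^{2 i θ₊}) coth(η(x,t)) ] and s(x,t) := (1/2) q₀ α cos θ₊ cot θ₊ · ( coth²(η(x,t)) - 1 ) on the open set Ω := { (x,t) : η(x,t) ≠ 0 }. Then for all (x,t) ∈ Ω: (i) ∂_x ∂_t q(x,t) + 2 s(x,t) q(x,t) = 0; (ii) ∂_x s(x,t) = ∂_t ( q(x,t) q(-x,-t) ) (note (-x,-t) ∈ Ω whenever (x,t) ∈ Ω); and (iii) s(-x,-t) = s(x,t). That is, q is a singular bright one-soliton solution of the nonlocal reverse space-time Sine-Gordon equation, singular exactly along the space-time line η(x,t) = 0. -/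

import Mathlib

open Complex

private lemma coth_hasDerivAt' {z : ℝ} (hz : z ≠ 0) :
    HasDerivAt (fun w => Real.cosh w / Real.sinh w)
      (1 - (Real.cosh z / Real.sinh z) ^ 2) z := by
  have hs : Real.sinh z ≠ 0 := fun h => hz (Real.sinh_eq_zero.mp h)
  have h := (Real.hasDerivAt_cosh z).div (Real.hasDerivAt_sinh z) hs
  simp only [Pi.div_def] at h
  refine h.congr_deriv (Eq.symm ?_)
  have := Real.cosh_sq_sub_sinh_sq z
  field_simp

private lemma cos_ne_zero_of' (θ : ℝ) (hθ : θ ∈ Set.Ioo 0 Real.pi) (hθ' : θ ≠ Real.pi / 2) :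
    Real.cos θ ≠ 0 := by
  intro h
  obtain ⟨k, hk⟩ := Real.cos_eq_zero_iff.mp h
  have hπ := Real.pi_pos
  have h1 : (0:ℝ) < 2 * (k:ℝ) + 1 := by nlinarith [hθ.1]
  have h2 : 2 * (k:ℝ) + 1 < 2 := by nlinarith [hθ.2]
  have hk0 : k = 0 := by
    have h3 : (-1:ℤ) < k := by exact_mod_cast show (-1:ℝ) < (k:ℝ) by linarith
    have h4 : k < (1:ℤ) := by exact_mod_cast show ((k:ℝ)) < 1 by linarith
    omega
  apply hθ'
  rw [hk, hk0]
  push_cast; ring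

/-- The singular bright one-soliton
`q(x,t) = (1/2) q₀ e^{i(αt - θ₊)}(-1 + e^{2iθ₊} + (1 + e^{2iθ₊}) coth η)`,
`η = q₀ x cos θ₊ - (αt/2) cot θ₊`, with
`s = (1/2) q₀ α cos θ₊ cot θ₊ (coth² η - 1)`, solves the nonlocal reverse
space-time Sine-Gordon equation on the open set `Ω = {η ≠ 0}`; moreover `Ω` is
invariant under `(x,t) ↦ (-x,-t)` and `s(-x,-t) = s(x,t)`. -/
theorem rst_sineGordon_singular_bright_one_soliton (q₀ α θp : ℝ) (hq₀ : 0 < q₀)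
    (hθ : θp ∈ Set.Ioo 0 Real.pi) (hθ' : θp ≠ Real.pi / 2)
    (coth : ℝ → ℝ) (hcoth : ∀ z : ℝ, coth z = Real.cosh z / Real.sinh z)
    (η : ℝ → ℝ → ℝ)
    (hη : ∀ x t : ℝ, η x t = q₀ * x * Real.cos θp - α * t / 2 * Real.cot θp)
    (q s : ℝ → ℝ → ℂ)
    (hq : ∀ x t : ℝ, q x t =
      (1 / 2 : ℂ) * (q₀ : ℂ) * Complex.exp (Complex.I * ((α * t - θp : ℝ) : ℂ)) *
        (-1 + Complex.exp (2 * Complex.I * (θp : ℂ)) +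
          (1 + Complex.exp (2 * Complex.I * (θp : ℂ))) * ((coth (η x t) : ℝ) : ℂ)))
    (hs : ∀ x t : ℝ, s x t =
      ((1 / 2 * q₀ * α * Real.cos θp * Real.cot θp * (coth (η x t) ^ 2 - 1) : ℝ) : ℂ)) :
    (∀ x t : ℝ, η x t ≠ 0 → η (-x) (-t) ≠ 0) ∧
    (∀ x t : ℝ, η x t ≠ 0 →
      deriv (fun y : ℝ => deriv (fun τ : ℝ => q y τ) t) x + 2 * s x t * q x t = 0) ∧
    (∀ x t : ℝ, η x t ≠ 0 →
      deriv (fun y : ℝ => s y t) x = deriv (fun τ : ℝ => q x τ * q (-x) (-τ)) t) ∧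
    (∀ x t : ℝ, η x t ≠ 0 → s (-x) (-t) = s x t) := by
  have hsin : Real.sin θp ≠ 0 := (Real.sin_pos_of_pos_of_lt_pi hθ.1 hθ.2).ne'
  have hηodd : ∀ x t : ℝ, η (-x) (-t) = - η x t := fun x t => by rw [hη, hη]; ring
  have hcothodd : ∀ z : ℝ, coth (-z) = - coth z := fun z => by
    rw [hcoth, hcoth, Real.cosh_neg, Real.sinh_neg, div_neg]
  set A : ℂ := -1 + Complex.exp (2 * Complex.I * (θp : ℂ)) with hA
  set B : ℂ := 1 + Complex.exp (2 * Complex.I * (θp : ℂ)) with hB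
  -- trigonometric identities
  have he2 : cexp (2 * Complex.I * (θp:ℂ)) = (Complex.cos θp + Complex.sin θp * Complex.I) ^ 2 := by
    rw [show (2 * Complex.I * (θp:ℂ)) = (θp:ℂ) * Complex.I + (θp:ℂ) * Complex.I by ring,
      Complex.exp_add, Complex.exp_mul_I]
    ring
  have hs2 : (Complex.cos (θp:ℂ)) ^ 2 + (Complex.sin (θp:ℂ)) ^ 2 = 1 := Complex.cos_sq_add_sin_sq _
  have hkey : Complex.cot (θp : ℂ) * A = Complex.I * B := by
    have hsC : Complex.sin (θp:ℂ) ≠ 0 := by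
      rw [← Complex.ofReal_sin]; exact_mod_cast hsin
    rw [hA, hB, ← Complex.ofReal_cot, Real.cot_eq_cos_div_sin, Complex.ofReal_div, Complex.ofReal_sin,
      Complex.ofReal_cos, he2, div_mul_eq_mul_div, div_eq_iff hsC]
    set c := Complex.cos (θp:ℂ); set s' := Complex.sin (θp:ℂ)
    linear_combination (c + Complex.I * s') * hs2 + (-(c * s' ^ 2) - s' ^ 3 * Complex.I) * Complex.I_sq
  have hBsq : B ^ 2 = 4 * (Complex.cos (θp:ℂ)) ^ 2 * cexp (2 * Complex.I * (θp:ℂ)) := by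
    rw [hB, he2]
    set c := Complex.cos (θp:ℂ); set s' := Complex.sin (θp:ℂ)
    linear_combination (-(1 + (c + s' * Complex.I) ^ 2 + 2 * c * (c + s' * Complex.I))) * hs2
      + (s' ^ 2 * (1 + (c + s' * Complex.I) ^ 2 + 2 * c * (c + s' * Complex.I))) * Complex.I_sq
  -- derivative building blocks
  have hηdx : ∀ (x t : ℝ), HasDerivAt (fun y => η y t) (q₀ * Real.cos θp) x := by
    intro x t
    have hfe : (fun y => η y t) = fun y => q₀ * y * Real.cos θp - α * t / 2 * Real.cot θp :=
      funext fun y => hη y t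
    rw [hfe]
    simpa using (((hasDerivAt_id x).const_mul q₀).mul_const (Real.cos θp)).sub_const (α * t / 2 * Real.cot θp)
  have hηdt : ∀ (x t : ℝ), HasDerivAt (fun τ => η x τ) (-(α / 2 * Real.cot θp)) t := by
    intro x t
    have hfe : (fun τ => η x τ) = fun τ => q₀ * x * Real.cos θp - α * τ / 2 * Real.cot θp :=
      funext fun τ => hη x τ
    rw [hfe]
    have h1 : HasDerivAt (fun τ : ℝ => α * τ / 2 * Real.cot θp) (α / 2 * Real.cot θp) t := by
      simpa [mul_div_assoc] using (((hasDerivAt_id t).const_mul α).div_const 2).mul_const (Real.cot θp)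
    simpa using (h1.const_sub (q₀ * x * Real.cos θp))
  have hu_dx : ∀ (x t : ℝ), η x t ≠ 0 → HasDerivAt (fun y => coth (η y t))
      ((1 - coth (η x t) ^ 2) * (q₀ * Real.cos θp)) x := by
    intro x t hne
    have h := (coth_hasDerivAt' hne).comp x (hηdx x t)
    simp only [hcoth]
    exact h
  have hu_dt : ∀ (x t : ℝ), η x t ≠ 0 → HasDerivAt (fun τ => coth (η x τ))
      ((1 - coth (η x t) ^ 2) * (-(α / 2 * Real.cot θp))) t := by
    intro x t hne
    have h := (coth_hasDerivAt' hne).comp t (hηdt x t)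
    simp only [hcoth]
    exact h
  have hEd : ∀ (a t : ℝ), HasDerivAt (fun τ : ℝ => cexp (Complex.I * ((a * τ - θp : ℝ) : ℂ)))
      (cexp (Complex.I * ((a * t - θp : ℝ) : ℂ)) * (Complex.I * a)) t := by
    intro a t
    have h1 : HasDerivAt (fun τ : ℝ => (τ : ℂ)) 1 t := by
      simpa using (hasDerivAt_id t).ofReal_comp
    have h2 : HasDerivAt (fun τ : ℝ => Complex.I * ((a * τ - θp : ℝ) : ℂ)) (Complex.I * a) t := by
      have h3 : (fun τ : ℝ => Complex.I * ((a * τ - θp : ℝ) : ℂ))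
          = fun τ : ℝ => Complex.I * ((a : ℂ) * (τ : ℂ)) - Complex.I * (θp : ℂ) := by
        funext τ; push_cast; ring
      rw [h3]
      simpa using (((h1.const_mul (a : ℂ)).const_mul Complex.I).sub_const (Complex.I * (θp : ℂ)))
    exact h2.cexp
  -- time derivative of q
  have hqdt : ∀ (y t : ℝ), η y t ≠ 0 → HasDerivAt (fun τ => q y τ)
      ((1 / 2 : ℂ) * (q₀ : ℂ) * cexp (Complex.I * ((α * t - θp : ℝ) : ℂ)) *
        (Complex.I * (α : ℂ) * (A + B * ((coth (η y t) : ℝ) : ℂ)) +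
          B * ((((1 - coth (η y t) ^ 2) * (-(α / 2 * Real.cot θp)) : ℝ)) : ℂ))) t := by
    intro y t hne
    have hfe : (fun τ => q y τ) = fun τ =>
        (1 / 2 : ℂ) * (q₀ : ℂ) * cexp (Complex.I * ((α * τ - θp : ℝ) : ℂ)) *
          (A + B * ((coth (η y τ) : ℝ) : ℂ)) := funext fun τ => hq y τ
    rw [hfe]
    have hE := (hEd α t).const_mul ((1 / 2 : ℂ) * (q₀ : ℂ))
    have hG : HasDerivAt (fun τ => A + B * ((coth (η y τ) : ℝ) : ℂ))
        (B * ((((1 - coth (η y t) ^ 2) * (-(α / 2 * Real.cot θp)) : ℝ)) : ℂ)) t :=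
      (((hu_dt y t hne).ofReal_comp).const_mul B).const_add A
    have h := hE.mul hG
    simp only [Pi.mul_def] at h
    refine h.congr_deriv (Eq.symm ?_)
    ring
  refine ⟨?_, ?_, ?_, ?_⟩
  · intro x t h
    rw [hηodd]
    exact neg_ne_zero.mpr h
  · -- main PDE
    intro x t hne
    have hcont : ContinuousAt (fun y => η y t) x := by
      have hfe : (fun y => η y t) = fun y => q₀ * y * Real.cos θp - α * t / 2 * Real.cot θp :=
        funext fun y => hη y t
      rw [hfe]; fun_prop
    have hev : (fun y => deriv (fun τ : ℝ => q y τ) t) =ᶠ[nhds x] (fun y =>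
        (1 / 2 : ℂ) * (q₀ : ℂ) * cexp (Complex.I * ((α * t - θp : ℝ) : ℂ)) *
          (Complex.I * (α : ℂ) * (A + B * ((coth (η y t) : ℝ) : ℂ)) +
            B * ((((1 - coth (η y t) ^ 2) * (-(α / 2 * Real.cot θp)) : ℝ)) : ℂ))) := by
      filter_upwards [hcont.eventually_ne hne] with y hy
      exact (hqdt y t hy).deriv
    rw [hev.deriv_eq]
    have hw := (hu_dx x t hne).ofReal_comp
    have hin : HasDerivAt (fun y => (1 - coth (η y t) ^ 2) * (-(α / 2 * Real.cot θp)))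
        ((-(2 * coth (η x t) ^ 1 * ((1 - coth (η x t) ^ 2) * (q₀ * Real.cos θp)))) *
          (-(α / 2 * Real.cot θp))) x :=
      (((hu_dx x t hne).pow 2).const_sub 1).mul_const _
    have hDq : HasDerivAt (fun y =>
        (1 / 2 : ℂ) * (q₀ : ℂ) * cexp (Complex.I * ((α * t - θp : ℝ) : ℂ)) *
          (Complex.I * (α : ℂ) * (A + B * ((coth (η y t) : ℝ) : ℂ)) +
            B * ((((1 - coth (η y t) ^ 2) * (-(α / 2 * Real.cot θp)) : ℝ)) : ℂ)))
        ((1 / 2 : ℂ) * (q₀ : ℂ) * cexp (Complex.I * ((α * t - θp : ℝ) : ℂ)) *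
          (Complex.I * (α : ℂ) * (B * (((1 - coth (η x t) ^ 2) * (q₀ * Real.cos θp) : ℝ) : ℂ)) +
            B * (((-(2 * coth (η x t) ^ 1 * ((1 - coth (η x t) ^ 2) * (q₀ * Real.cos θp)))) *
              (-(α / 2 * Real.cot θp)) : ℝ) : ℂ))) x := by
      exact (((((hu_dx x t hne).ofReal_comp.const_mul B).const_add A).const_mul
        (Complex.I * (α : ℂ))).add (hin.ofReal_comp.const_mul B)).const_mul _
    rw [hDq.deriv, hs x t, hq x t]
    push_cast
    linear_combination (-((1 / 2 : ℂ) * (q₀ : ℂ) * cexp (Complex.I * ((α : ℂ) * (t : ℂ) - (θp : ℂ)))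
      * (q₀ : ℂ) * (α : ℂ) * Complex.cos (θp : ℂ)
      * (1 - ((coth (η x t) : ℝ) : ℂ) ^ 2))) * hkey
  · -- s_x = (q(x,t)q(-x,-t))_t
    intro x t hne
    -- LHS
    have hsx : HasDerivAt (fun y => s y t)
        (((1 / 2 * q₀ * α * Real.cos θp * Real.cot θp *
          (2 * coth (η x t) ^ 1 * ((1 - coth (η x t) ^ 2) * (q₀ * Real.cos θp))) : ℝ)) : ℂ) x := by
      have hfe : (fun y => s y t) = fun y =>
          (((1 / 2 * q₀ * α * Real.cos θp * Real.cot θp * (coth (η y t) ^ 2 - 1) : ℝ)) : ℂ) :=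
        funext fun y => hs y t
      rw [hfe]
      exact ((((hu_dx x t hne).pow 2).sub_const 1).const_mul _).ofReal_comp
    -- RHS
    have hfe2 : (fun τ : ℝ => q x τ * q (-x) (-τ)) = fun τ =>
        ((1 / 2 : ℂ) * (q₀ : ℂ) * cexp (Complex.I * ((α * τ - θp : ℝ) : ℂ)) *
          (A + B * ((coth (η x τ) : ℝ) : ℂ))) *
        ((1 / 2 : ℂ) * (q₀ : ℂ) * cexp (Complex.I * (((-α) * τ - θp : ℝ) : ℂ)) *
          (A - B * ((coth (η x τ) : ℝ) : ℂ))) := by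
      funext τ
      rw [hq, hq, hηodd, hcothodd]
      push_cast
      ring_nf
    have hF : HasDerivAt (fun τ =>
        (1 / 2 : ℂ) * (q₀ : ℂ) * cexp (Complex.I * ((α * τ - θp : ℝ) : ℂ)) *
          (A + B * ((coth (η x τ) : ℝ) : ℂ)))
        ((1 / 2 : ℂ) * (q₀ : ℂ) * (cexp (Complex.I * ((α * t - θp : ℝ) : ℂ)) * (Complex.I * (α:ℂ))) *
          (A + B * ((coth (η x t) : ℝ) : ℂ)) +
          (1 / 2 : ℂ) * (q₀ : ℂ) * cexp (Complex.I * ((α * t - θp : ℝ) : ℂ)) *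
          (B * ((((1 - coth (η x t) ^ 2) * (-(α / 2 * Real.cot θp)) : ℝ)) : ℂ))) t :=
      ((hEd α t).const_mul ((1 / 2 : ℂ) * (q₀ : ℂ))).mul
        ((((hu_dt x t hne).ofReal_comp).const_mul B).const_add A)
    have hG : HasDerivAt (fun τ =>
        (1 / 2 : ℂ) * (q₀ : ℂ) * cexp (Complex.I * (((-α) * τ - θp : ℝ) : ℂ)) *
          (A - B * ((coth (η x τ) : ℝ) : ℂ)))
        ((1 / 2 : ℂ) * (q₀ : ℂ) * (cexp (Complex.I * (((-α) * t - θp : ℝ) : ℂ)) * (Complex.I * ((-α:ℝ):ℂ))) *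
          (A - B * ((coth (η x t) : ℝ) : ℂ)) +
          (1 / 2 : ℂ) * (q₀ : ℂ) * cexp (Complex.I * (((-α) * t - θp : ℝ) : ℂ)) *
          (-(B * ((((1 - coth (η x t) ^ 2) * (-(α / 2 * Real.cot θp)) : ℝ)) : ℂ)))) t :=
      ((hEd (-α) t).const_mul ((1 / 2 : ℂ) * (q₀ : ℂ))).mul
        ((((hu_dt x t hne).ofReal_comp).const_mul B).const_sub A)
    have hprodd := hF.mul hG
    simp only [Pi.mul_def] at hprodd
    rw [hsx.deriv, hfe2, hprodd.deriv]
    have hprod : cexp (Complex.I * ((α * t - θp : ℝ) : ℂ)) *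
        cexp (Complex.I * (((-α) * t - θp : ℝ) : ℂ)) * cexp (2 * Complex.I * (θp:ℂ)) = 1 := by
      rw [← Complex.exp_add, ← Complex.exp_add, ← Complex.exp_zero]
      congr 1
      push_cast; ring
    push_cast
    set u : ℂ := ((coth (η x t) : ℝ) : ℂ)
    set e1 : ℂ := cexp (Complex.I * ((α:ℂ) * (t:ℂ) - (θp:ℂ)))
    set e2 : ℂ := cexp (Complex.I * (-(α:ℂ) * (t:ℂ) - (θp:ℂ)))
    set E : ℂ := cexp (2 * Complex.I * (θp:ℂ))
    push_cast at hprod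
    linear_combination (-((q₀:ℂ) ^ 2 / 4) * (α:ℂ) * Complex.cot (θp:ℂ) * u * (1 - u ^ 2) * e1 * e2) * hBsq
      + (-(q₀:ℂ) ^ 2 * (α:ℂ) * (Complex.cos (θp:ℂ)) ^ 2 * Complex.cot (θp:ℂ) * u * (1 - u ^ 2)) * hprod
  · intro x t h
    rw [hs, hs, hηodd, hcothodd]
    norm_num
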